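/- Solvability of the implicit Euler step of the angular sub-problem: for every Δt ≥ 0, the operator I + Δt K_σ is a bijection of L²(Ω × S²) onto itself; that is, for every g ∈ L²(Ω × S²) there exists a unique ũ ∈ L²(Ω × S²) with ũ + Δt K_σ ũ = g. -/

import Mathlib

open MeasureTheory Metric Real
open scoped ENNReal RealInnerProductSpace

noncomputable section

/-- The ambient Euclidean space `ℝ³`. -/
abbrev E3 := EuclideanSpace ℝ (Fin 3)

/-- The unit sphere `S² ⊆ ℝ³`. -/
abbrev S2 := Metric.sphere (0 : E3) 1

/-- The surface measure on the unit sphere `S²`. -/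
def sphereMeasure : Measure S2 := (volume : Measure E3).toSphere

/-- The scattering operator `(Kv)(x,s) = ∫_{S²} Φ(s,s') v(x,s') dσ(s')`. -/
def scatK (Φ : S2 → S2 → ℝ) (v : E3 × S2 → ℝ) : E3 × S2 → ℝ :=
  fun p => ∫ s', Φ p.2 s' * v (p.1, s') ∂sphereMeasure

/-- The product measure on `Ω × S²` (Lebesgue measure restricted to `Ω` times the
surface measure on `S²`). -/
def rteMeasure (Ω : Set E3) : Measure (E3 × S2) :=
  ((volume : Measure E3).restrict Ω).prod sphereMeasure

/-- The removal operator `(K_σ v)(x,s) = σ_a(x) v(x,s) + σ_s(x) (v(x,s) - (Kv)(x,s))`. -/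
def removalK (Φ : S2 → S2 → ℝ) (σa σs : E3 → ℝ) (v : E3 × S2 → ℝ) : E3 × S2 → ℝ :=
  fun p => σa p.1 * v p + σs p.1 * (v p - scatK Φ v p)

instance : IsFiniteMeasure sphereMeasure := by unfold sphereMeasure; infer_instance

section Aux
variable {Φ : S2 → S2 → ℝ}

lemma phi_slice_meas (hΦ : Measurable (Function.uncurry Φ)) (s : S2) : Measurable (Φ s) :=
  hΦ.of_uncurry_left

lemma phi_slice_meas' (hΦ : Measurable (Function.uncurry Φ)) (y : S2) :
    Measurable (fun s => Φ s y) := hΦ.of_uncurry_right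

lemma phi_lintegral_one (hΦ : Measurable (Function.uncurry Φ)) (hΦpos : ∀ s s', 0 ≤ Φ s s')
    (hΦnorm : ∀ s, (∫ s', Φ s s' ∂sphereMeasure) = 1) (s : S2) :
    ∫⁻ y, ENNReal.ofReal (Φ s y) ∂sphereMeasure = 1 := by
  have hint : Integrable (Φ s) sphereMeasure := by
    by_contra h
    have h2 := hΦnorm s
    rw [integral_undef h] at h2
    norm_num at h2
  rw [← ofReal_integral_eq_lintegral_ofReal hint (Filter.Eventually.of_forall (hΦpos s)),
    hΦnorm s, ENNReal.ofReal_one]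

lemma cs_bound (hΦ : Measurable (Function.uncurry Φ)) (hΦpos : ∀ s s', 0 ≤ Φ s s')
    (hΦnorm : ∀ s, (∫ s', Φ s s' ∂sphereMeasure) = 1) (s : S2) {v : S2 → ℝ}
    (hv : Measurable v) :
    ∫⁻ y, ENNReal.ofReal (Φ s y) * (‖v y‖₊ : ℝ≥0∞) ∂sphereMeasure ≤
      (∫⁻ y, ENNReal.ofReal (Φ s y) * (‖v y‖₊ : ℝ≥0∞) ^ (2:ℝ) ∂sphereMeasure) ^ (1/2:ℝ) := by
  set F : S2 → ℝ≥0∞ := fun y => ENNReal.ofReal (Φ s y) with hF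
  have hFm : Measurable F := (phi_slice_meas hΦ s).ennreal_ofReal
  have hpq : (2:ℝ).HolderConjugate 2 := Real.HolderConjugate.two_two
  have h := ENNReal.lintegral_mul_le_Lp_mul_Lq sphereMeasure hpq
    (f := fun y => F y ^ (1/2:ℝ)) (g := fun y => F y ^ (1/2:ℝ) * (‖v y‖₊ : ℝ≥0∞))
    (hFm.pow_const _).aemeasurable
    ((hFm.pow_const _).mul hv.enorm).aemeasurable
  have e1 : ∀ y, (fun y => F y ^ (1/2:ℝ)) y * (fun y => F y ^ (1/2:ℝ) * (‖v y‖₊ : ℝ≥0∞)) y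
      = F y * (‖v y‖₊ : ℝ≥0∞) := by
    intro y
    have : F y ^ (1/2:ℝ) * F y ^ (1/2:ℝ) = F y := by
      rw [← ENNReal.rpow_add_of_nonneg _ _ (by norm_num) (by norm_num)]
      norm_num
    simp only [← mul_assoc, this]
  have e2 : ∀ y, ((fun y => F y ^ (1/2:ℝ)) y) ^ (2:ℝ) = F y := by
    intro y
    show (F y ^ (1/2:ℝ)) ^ (2:ℝ) = F y
    rw [← ENNReal.rpow_mul]
    norm_num
  have e3 : ∀ y, ((fun y => F y ^ (1/2:ℝ) * (‖v y‖₊ : ℝ≥0∞)) y) ^ (2:ℝ)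
      = F y * (‖v y‖₊ : ℝ≥0∞) ^ (2:ℝ) := by
    intro y
    show (F y ^ (1/2:ℝ) * (‖v y‖₊ : ℝ≥0∞)) ^ (2:ℝ) = F y * (‖v y‖₊ : ℝ≥0∞) ^ (2:ℝ)
    rw [ENNReal.mul_rpow_of_nonneg _ _ (by norm_num)]
    congr 1
    rw [← ENNReal.rpow_mul]
    norm_num
  simp only [Pi.mul_apply] at h
  calc ∫⁻ y, F y * (‖v y‖₊ : ℝ≥0∞) ∂sphereMeasure
      = ∫⁻ y, (fun y => F y ^ (1/2:ℝ)) y * (fun y => F y ^ (1/2:ℝ) * (‖v y‖₊ : ℝ≥0∞)) y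
        ∂sphereMeasure := by
        refine lintegral_congr fun y => (e1 y).symm
    _ ≤ (∫⁻ y, ((fun y => F y ^ (1/2:ℝ)) y) ^ (2:ℝ) ∂sphereMeasure) ^ (1/2:ℝ) *
        (∫⁻ y, ((fun y => F y ^ (1/2:ℝ) * (‖v y‖₊ : ℝ≥0∞)) y) ^ (2:ℝ) ∂sphereMeasure) ^ (1/2:ℝ) := h
    _ = (∫⁻ y, F y ∂sphereMeasure) ^ (1/2:ℝ) *
        (∫⁻ y, F y * (‖v y‖₊ : ℝ≥0∞) ^ (2:ℝ) ∂sphereMeasure) ^ (1/2:ℝ) := by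
        rw [lintegral_congr e2, lintegral_congr e3]
    _ = (∫⁻ y, F y * (‖v y‖₊ : ℝ≥0∞) ^ (2:ℝ) ∂sphereMeasure) ^ (1/2:ℝ) := by
        rw [hF]
        rw [phi_lintegral_one hΦ hΦpos hΦnorm s]
        simp


lemma scat_pointwise (hΦ : Measurable (Function.uncurry Φ)) (hΦpos : ∀ s s', 0 ≤ Φ s s')
    (hΦnorm : ∀ s, (∫ s', Φ s s' ∂sphereMeasure) = 1) {v : E3 × S2 → ℝ}
    (hv : Measurable v) (x : E3) (s : S2) :
    (‖scatK Φ v (x, s)‖₊ : ℝ≥0∞) ^ (2:ℝ) ≤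
      ∫⁻ y, ENNReal.ofReal (Φ s y) * (‖v (x, y)‖₊ : ℝ≥0∞) ^ (2:ℝ) ∂sphereMeasure := by
  have hvx : Measurable (fun y => v (x, y)) := hv.comp measurable_prodMk_left
  have h1 : (‖scatK Φ v (x, s)‖₊ : ℝ≥0∞) ≤
      ∫⁻ y, ENNReal.ofReal (Φ s y) * (‖v (x, y)‖₊ : ℝ≥0∞) ∂sphereMeasure := by
    refine (enorm_integral_le_lintegral_enorm _).trans_eq (lintegral_congr fun y => ?_)
    exact (enorm_mul _ _).trans (congrArg (· * _) (Real.enorm_eq_ofReal (hΦpos s y)))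
  calc (‖scatK Φ v (x, s)‖₊ : ℝ≥0∞) ^ (2:ℝ)
      ≤ ((∫⁻ y, ENNReal.ofReal (Φ s y) * (‖v (x, y)‖₊ : ℝ≥0∞) ^ (2:ℝ) ∂sphereMeasure)
          ^ (1/2:ℝ)) ^ (2:ℝ) :=
        ENNReal.rpow_le_rpow (h1.trans (cs_bound hΦ hΦpos hΦnorm s hvx)) (by norm_num)
    _ = _ := by rw [← ENNReal.rpow_mul]; norm_num

lemma scat_meas (hΦ : Measurable (Function.uncurry Φ)) {v : E3 × S2 → ℝ}
    (hv : Measurable v) : Measurable (scatK Φ v) := by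
  have : StronglyMeasurable (fun q : (E3 × S2) × S2 => Φ q.1.2 q.2 * v (q.1.1, q.2)) := by
    apply Measurable.stronglyMeasurable
    exact (hΦ.comp ((measurable_snd.comp measurable_fst).prodMk measurable_snd)).mul
      (hv.comp ((measurable_fst.comp measurable_fst).prodMk measurable_snd))
  exact this.integral_prod_right'.measurable

lemma tonelli_phi (hΦ : Measurable (Function.uncurry Φ)) (hΦpos : ∀ s s', 0 ≤ Φ s s')
    (hΦsymm : ∀ s s', Φ s s' = Φ s' s)
    (hΦnorm : ∀ s, (∫ s', Φ s s' ∂sphereMeasure) = 1)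
    (ρ : Measure E3) [SFinite ρ] {v : E3 × S2 → ℝ} (hv : Measurable v) :
    ∫⁻ p, (∫⁻ y, ENNReal.ofReal (Φ p.2 y) * (‖v (p.1, y)‖₊ : ℝ≥0∞) ^ (2:ℝ) ∂sphereMeasure)
        ∂(ρ.prod sphereMeasure)
      = ∫⁻ p, (‖v p‖₊ : ℝ≥0∞) ^ (2:ℝ) ∂(ρ.prod sphereMeasure) := by
  have hW : Measurable fun q : E3 × S2 => (‖v q‖₊ : ℝ≥0∞) ^ (2:ℝ) :=
    hv.enorm.pow_const _
  have hinner : Measurable fun q : (E3 × S2) × S2 =>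
      ENNReal.ofReal (Φ q.1.2 q.2) * (‖v (q.1.1, q.2)‖₊ : ℝ≥0∞) ^ (2:ℝ) :=
    ((hΦ.comp ((measurable_snd.comp measurable_fst).prodMk measurable_snd)).ennreal_ofReal).mul
      ((hv.comp ((measurable_fst.comp measurable_fst).prodMk measurable_snd)).enorm.pow_const _)
  rw [MeasureTheory.lintegral_prod _ (hinner.lintegral_prod_right').aemeasurable,
    MeasureTheory.lintegral_prod _ hW.aemeasurable]
  refine lintegral_congr fun x => ?_
  have hswap : ∫⁻ s, ∫⁻ y, ENNReal.ofReal (Φ s y) * (‖v (x, y)‖₊ : ℝ≥0∞) ^ (2:ℝ)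
        ∂sphereMeasure ∂sphereMeasure
      = ∫⁻ y, ∫⁻ s, ENNReal.ofReal (Φ s y) * (‖v (x, y)‖₊ : ℝ≥0∞) ^ (2:ℝ)
        ∂sphereMeasure ∂sphereMeasure := by
    apply lintegral_lintegral_swap
    exact (((hΦ.comp ((measurable_fst).prodMk measurable_snd)).ennreal_ofReal).mul
      ((hv.comp (measurable_const.prodMk measurable_snd)).enorm.pow_const _)).aemeasurable
  rw [hswap]
  refine lintegral_congr fun y => ?_
  rw [lintegral_mul_const'' _ ((phi_slice_meas' hΦ y).ennreal_ofReal.aemeasurable)]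
  have : ∫⁻ s, ENNReal.ofReal (Φ s y) ∂sphereMeasure = 1 := by
    rw [lintegral_congr fun s => by rw [hΦsymm s y]]
    exact phi_lintegral_one hΦ hΦpos hΦnorm y
  rw [this, one_mul]

lemma scat_eLpNorm_le (hΦ : Measurable (Function.uncurry Φ)) (hΦpos : ∀ s s', 0 ≤ Φ s s')
    (hΦsymm : ∀ s s', Φ s s' = Φ s' s)
    (hΦnorm : ∀ s, (∫ s', Φ s s' ∂sphereMeasure) = 1)
    (ρ : Measure E3) [SFinite ρ] {v : E3 × S2 → ℝ} (hv : Measurable v) :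
    eLpNorm (scatK Φ v) 2 (ρ.prod sphereMeasure) ≤ eLpNorm v 2 (ρ.prod sphereMeasure) := by
  rw [eLpNorm_eq_lintegral_rpow_enorm_toReal two_ne_zero ENNReal.ofNat_ne_top,
    eLpNorm_eq_lintegral_rpow_enorm_toReal two_ne_zero ENNReal.ofNat_ne_top]
  simp only [ENNReal.toReal_ofNat]
  refine ENNReal.rpow_le_rpow ?_ (by norm_num)
  calc ∫⁻ p, (‖scatK Φ v p‖₊ : ℝ≥0∞) ^ (2:ℝ) ∂(ρ.prod sphereMeasure)
      ≤ ∫⁻ p, (∫⁻ y, ENNReal.ofReal (Φ p.2 y) * (‖v (p.1, y)‖₊ : ℝ≥0∞) ^ (2:ℝ)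
          ∂sphereMeasure) ∂(ρ.prod sphereMeasure) :=
        lintegral_mono fun p => scat_pointwise hΦ hΦpos hΦnorm hv p.1 p.2
    _ = _ := tonelli_phi hΦ hΦpos hΦsymm hΦnorm ρ hv

lemma ae_prod_fst (ρ : Measure E3) {P : E3 → Prop} (h : ∀ᵐ x ∂ρ, P x) :
    ∀ᵐ p ∂(ρ.prod sphereMeasure), P p.1 := by
  rw [MeasureTheory.ae_iff] at h ⊢
  refine measure_mono_null (t := {x | ¬ P x} ×ˢ (Set.univ : Set S2)) (fun p hp => ?_) ?_
  · exact Set.mk_mem_prod hp (Set.mem_univ p.2)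
  · rw [Measure.prod_prod, h, zero_mul]

lemma scat_congr (ρ : Measure E3) {v v' : E3 × S2 → ℝ}
    (h : v =ᵐ[ρ.prod sphereMeasure] v') :
    scatK Φ v =ᵐ[ρ.prod sphereMeasure] scatK Φ v' := by
  have h1 := Measure.ae_ae_of_ae_prod h
  have key : ∀ᵐ x ∂ρ, ∀ s : S2, scatK Φ v (x, s) = scatK Φ v' (x, s) := by
    refine h1.mono fun x hx s => integral_congr_ae (hx.mono fun y hy => by dsimp only; rw [hy])
  exact (ae_prod_fst ρ key).mono fun p hp => hp p.2

lemma scat_slice_int (hΦ : Measurable (Function.uncurry Φ)) (hΦpos : ∀ s s', 0 ≤ Φ s s')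
    (hΦsymm : ∀ s s', Φ s s' = Φ s' s)
    (hΦnorm : ∀ s, (∫ s', Φ s s' ∂sphereMeasure) = 1)
    (ρ : Measure E3) [SFinite ρ] {v : E3 × S2 → ℝ} (hv : Measurable v)
    (hfin : ∫⁻ p, (‖v p‖₊ : ℝ≥0∞) ^ (2:ℝ) ∂(ρ.prod sphereMeasure) ≠ ⊤) :
    ∀ᵐ p ∂(ρ.prod sphereMeasure),
      Integrable (fun y => Φ p.2 y * v (p.1, y)) sphereMeasure := by
  have hinner : Measurable fun q : (E3 × S2) × S2 =>
      ENNReal.ofReal (Φ q.1.2 q.2) * (‖v (q.1.1, q.2)‖₊ : ℝ≥0∞) ^ (2:ℝ) :=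
    ((hΦ.comp ((measurable_snd.comp measurable_fst).prodMk measurable_snd)).ennreal_ofReal).mul
      ((hv.comp ((measurable_fst.comp measurable_fst).prodMk measurable_snd)).enorm.pow_const _)
  have h1 : ∀ᵐ p ∂(ρ.prod sphereMeasure),
      (∫⁻ y, ENNReal.ofReal (Φ p.2 y) * (‖v (p.1, y)‖₊ : ℝ≥0∞) ^ (2:ℝ) ∂sphereMeasure) < ⊤ := by
    refine ae_lt_top (hinner.lintegral_prod_right') ?_
    rw [tonelli_phi hΦ hΦpos hΦsymm hΦnorm ρ hv]
    exact hfin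
  filter_upwards [h1] with p hp
  refine ⟨((phi_slice_meas hΦ p.2).mul (hv.comp measurable_prodMk_left)).aestronglyMeasurable, ?_⟩
  rw [HasFiniteIntegral]
  calc ∫⁻ y, (‖Φ p.2 y * v (p.1, y)‖₊ : ℝ≥0∞) ∂sphereMeasure
      = ∫⁻ y, ENNReal.ofReal (Φ p.2 y) * (‖v (p.1, y)‖₊ : ℝ≥0∞) ∂sphereMeasure := by
        refine lintegral_congr fun y => ?_
        rw [nnnorm_mul, ENNReal.coe_mul]; exact congrArg (· * _) (Real.enorm_eq_ofReal (hΦpos p.2 y))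
    _ ≤ (∫⁻ y, ENNReal.ofReal (Φ p.2 y) * (‖v (p.1, y)‖₊ : ℝ≥0∞) ^ (2:ℝ) ∂sphereMeasure)
        ^ (1/2:ℝ) := cs_bound hΦ hΦpos hΦnorm p.2 (hv.comp measurable_prodMk_left)
    _ < ⊤ := ENNReal.rpow_lt_top_of_nonneg (by norm_num) hp.ne

lemma scat_sub (hΦ : Measurable (Function.uncurry Φ)) (hΦpos : ∀ s s', 0 ≤ Φ s s')
    (hΦsymm : ∀ s s', Φ s s' = Φ s' s)
    (hΦnorm : ∀ s, (∫ s', Φ s s' ∂sphereMeasure) = 1)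
    (ρ : Measure E3) [SFinite ρ] {v w : E3 × S2 → ℝ} (hv : Measurable v) (hw : Measurable w)
    (hvfin : ∫⁻ p, (‖v p‖₊ : ℝ≥0∞) ^ (2:ℝ) ∂(ρ.prod sphereMeasure) ≠ ⊤)
    (hwfin : ∫⁻ p, (‖w p‖₊ : ℝ≥0∞) ^ (2:ℝ) ∂(ρ.prod sphereMeasure) ≠ ⊤) :
    ∀ᵐ p ∂(ρ.prod sphereMeasure), scatK Φ (v - w) p = scatK Φ v p - scatK Φ w p := by
  filter_upwards [scat_slice_int hΦ hΦpos hΦsymm hΦnorm ρ hv hvfin,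
    scat_slice_int hΦ hΦpos hΦsymm hΦnorm ρ hw hwfin] with p h1 h2
  unfold scatK
  rw [← integral_sub h1 h2]
  refine integral_congr_ae (Filter.Eventually.of_forall fun y => ?_)
  simp only [Pi.sub_apply, mul_sub]


lemma memlp_fin {α : Type*} [MeasurableSpace α] {μ : Measure α} {v : α → ℝ}
    (h : MemLp v 2 μ) : ∫⁻ p, (‖v p‖₊ : ℝ≥0∞) ^ (2:ℝ) ∂μ ≠ ⊤ := by
  have h2 := h.2
  rw [eLpNorm_eq_lintegral_rpow_enorm_toReal two_ne_zero ENNReal.ofNat_ne_top] at h2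
  simp only [ENNReal.toReal_ofNat] at h2
  intro hc
  rw [show ∫⁻ x, ‖v x‖ₑ ^ (2:ℝ) ∂μ = ⊤ from hc] at h2
  rw [ENNReal.top_rpow_of_pos (by norm_num)] at h2
  exact (lt_irrefl _ h2).elim

end Aux

/-- solvability of the implicit Euler step: for every `Δt ≥ 0` the
operator `I + Δt K_σ` is a bijection of `L²(Ω × S²)` onto itself: every
`g ∈ L²(Ω × S²)` has a unique (up to a.e. equality) preimage `ũ ∈ L²(Ω × S²)`
with `ũ + Δt K_σ ũ = g`. -/
theorem implicitEuler_solvable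
    (Ω : Set E3) (hΩo : IsOpen Ω) (hΩb : Bornology.IsBounded Ω)
    (Φ : S2 → S2 → ℝ)
    (hΦmeas : Measurable (Function.uncurry Φ))
    (hΦpos : ∀ s s', 0 ≤ Φ s s')
    (hΦsymm : ∀ s s', Φ s s' = Φ s' s)
    (hΦnorm : ∀ s, (∫ s', Φ s s' ∂sphereMeasure) = 1)
    (σa σs : E3 → ℝ) (hσa_meas : Measurable σa) (hσs_meas : Measurable σs)
    (σa_lo σa_hi σs_hi : ℝ)
    (hσa_lo_pos : 0 < σa_lo) (hσa_hi_pos : 0 < σa_hi) (hσs_hi_pos : 0 < σs_hi)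
    (hσs_bound : ∀ᵐ x ∂(volume : Measure E3).restrict Ω, 0 ≤ σs x ∧ σs x ≤ σs_hi)
    (hσa_bound : ∀ᵐ x ∂(volume : Measure E3).restrict Ω, σa_lo ≤ σa x ∧ σa x ≤ σa_hi)
    (Δt : ℝ) (hΔt : 0 ≤ Δt)
    (g : E3 × S2 → ℝ) (hg : MemLp g 2 (rteMeasure Ω)) :
    ∃ util : E3 × S2 → ℝ, MemLp util 2 (rteMeasure Ω) ∧
      (∀ᵐ p ∂(rteMeasure Ω), util p + Δt * removalK Φ σa σs util p = g p) ∧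
      ∀ util' : E3 × S2 → ℝ, MemLp util' 2 (rteMeasure Ω) →
        (∀ᵐ p ∂(rteMeasure Ω), util' p + Δt * removalK Φ σa σs util' p = g p) →
        util' =ᵐ[rteMeasure Ω] util := by
  classical
  simp only [rteMeasure] at hg ⊢
  set ρ : Measure E3 := (volume : Measure E3).restrict Ω with hρ
  haveI hsf : SFinite ρ := by rw [hρ]; infer_instance
  set μ : Measure (E3 × S2) := ρ.prod sphereMeasure with hμ
  -- truncated coefficients
  set σa' : E3 → ℝ := fun x => max σa_lo (σa x) with hσa'
  set σs' : E3 → ℝ := fun x => max 0 (min (σs x) σs_hi) with hσs'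
  have hσa'_meas : Measurable σa' := measurable_const.max hσa_meas
  have hσs'_meas : Measurable σs' := measurable_const.max (hσs_meas.min measurable_const)
  have hσa'_lo : ∀ x, σa_lo ≤ σa' x := fun x => le_max_left _ _
  have hσs'_lo : ∀ x, 0 ≤ σs' x := fun x => le_max_left _ _
  have hσs'_hi : ∀ x, σs' x ≤ σs_hi := fun x => max_le hσs_hi_pos.le (min_le_right _ _)
  have hσa'_ae : ∀ᵐ x ∂ρ, σa' x = σa x := hσa_bound.mono fun x hx => max_eq_right hx.1
  have hσs'_ae : ∀ᵐ x ∂ρ, σs' x = σs x := hσs_bound.mono fun x hx => by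
    simp only [hσs']; rw [min_eq_left hx.2, max_eq_right hx.1]
  set m : E3 → ℝ := fun x => 1 + Δt * (σa' x + σs' x) with hm
  have hm_meas : Measurable m := measurable_const.add ((hσa'_meas.add hσs'_meas).const_mul Δt)
  have hm1 : ∀ x, 1 ≤ m x := fun x => by
    have h1 : 0 ≤ σa' x := hσa_lo_pos.le.trans (hσa'_lo x)
    have h2 := hσs'_lo x
    simp only [hm]
    nlinarith
  have hm0 : ∀ x, 0 < m x := fun x => lt_of_lt_of_le one_pos (hm1 x)
  set q : ℝ := Δt * σs_hi / (1 + Δt * (σa_lo + σs_hi)) with hq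
  have hden : 0 < 1 + Δt * (σa_lo + σs_hi) := by nlinarith
  have hq0 : 0 ≤ q := div_nonneg (by nlinarith) hden.le
  have hq1 : q < 1 := by
    rw [hq, div_lt_one hden]
    nlinarith
  have ha : ∀ x, Δt * σs' x / m x ≤ q := fun x => by
    rw [hq, div_le_div_iff₀ (hm0 x) hden]
    have h1 := hσa'_lo x
    have h2 := hσs'_lo x
    have h3 := hσs'_hi x
    have hmexp : m x = 1 + Δt * (σa' x + σs' x) := rfl
    rw [hmexp]
    have key : σs' x * σa_lo ≤ σs_hi * σa' x :=
      mul_le_mul h3 h1 hσa_lo_pos.le (h2.trans h3)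
    nlinarith [mul_le_mul_of_nonneg_left h3 hΔt,
      mul_le_mul_of_nonneg_left key (mul_nonneg hΔt hΔt)]
  set Tf : (E3 × S2 → ℝ) → E3 × S2 → ℝ :=
    fun w p => (g p + Δt * σs' p.1 * scatK Φ w p) / m p.1 with hTf
  have hscat_mem : ∀ w : E3 × S2 → ℝ, Measurable w → MemLp w 2 μ →
      MemLp (scatK Φ w) 2 μ := fun w hwm hw =>
    ⟨(scat_meas hΦmeas hwm).aestronglyMeasurable,
      lt_of_le_of_lt (scat_eLpNorm_le hΦmeas hΦpos hΦsymm hΦnorm ρ hwm) hw.2⟩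
  have hTf_mem : ∀ w, Measurable w → MemLp w 2 μ → MemLp (Tf w) 2 μ := by
    intro w hwm hw
    have hs := hscat_mem w hwm hw
    have hmaj : MemLp (fun p => ‖g p‖ + (Δt * σs_hi) * ‖scatK Φ w p‖) 2 μ :=
      hg.norm.add (hs.norm.const_mul _)
    refine MemLp.of_le hmaj ?_ (Filter.Eventually.of_forall fun p => ?_)
    · have hTfe : Tf w = fun p => (g p + Δt * σs' p.1 * scatK Φ w p) * (m p.1)⁻¹ := by
        funext p; simp only [hTf]; rw [div_eq_mul_inv]
      rw [hTfe]
      exact (hg.1.add ((((hσs'_meas.comp measurable_fst).const_mul Δt).mul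
        (scat_meas hΦmeas hwm)).aestronglyMeasurable)).mul
        ((hm_meas.comp measurable_fst).inv.aestronglyMeasurable)
    · have hA : |g p + Δt * σs' p.1 * scatK Φ w p| ≤
          ‖g p‖ + (Δt * σs_hi) * ‖scatK Φ w p‖ := by
        refine (abs_add_le _ _).trans ?_
        rw [Real.norm_eq_abs, Real.norm_eq_abs, abs_mul, abs_mul]
        have hc : |Δt| * |σs' p.1| ≤ Δt * σs_hi := by
          rw [abs_of_nonneg hΔt, abs_of_nonneg (hσs'_lo p.1)]
          exact mul_le_mul_of_nonneg_left (hσs'_hi p.1) hΔt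
        nlinarith [abs_nonneg (scatK Φ w p)]
      calc ‖Tf w p‖ = |g p + Δt * σs' p.1 * scatK Φ w p| / m p.1 := by
            simp only [hTf, Real.norm_eq_abs, abs_div]
            rw [abs_of_pos (hm0 p.1)]
        _ ≤ |g p + Δt * σs' p.1 * scatK Φ w p| := div_le_self (abs_nonneg _) (hm1 p.1)
        _ ≤ ‖g p‖ + (Δt * σs_hi) * ‖scatK Φ w p‖ := hA
        _ ≤ ‖‖g p‖ + (Δt * σs_hi) * ‖scatK Φ w p‖‖ := le_abs_self _
  have hTf_lip : ∀ w w', Measurable w → Measurable w' → MemLp w 2 μ → MemLp w' 2 μ →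
      eLpNorm (Tf w - Tf w') 2 μ ≤ ENNReal.ofReal q * eLpNorm (w - w') 2 μ := by
    intro w w' hwm hw'm hw hw'
    have hsub := scat_sub hΦmeas hΦpos hΦsymm hΦnorm ρ hwm hw'm (memlp_fin hw) (memlp_fin hw')
    have step1 : eLpNorm (Tf w - Tf w') 2 μ ≤
        eLpNorm (fun p => q * scatK Φ (w - w') p) 2 μ := by
      refine eLpNorm_mono_ae ?_
      filter_upwards [hsub] with p hp
      have heq : Tf w p - Tf w' p =
          (Δt * σs' p.1 / m p.1) * (scatK Φ w p - scatK Φ w' p) := by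
        simp only [hTf]
        field_simp
        ring
      show ‖(Tf w - Tf w') p‖ ≤ ‖q * scatK Φ (w - w') p‖
      rw [Pi.sub_apply, heq, ← hp, Real.norm_eq_abs, Real.norm_eq_abs, abs_mul, abs_mul]
      have hd0 : 0 ≤ Δt * σs' p.1 / m p.1 :=
        div_nonneg (mul_nonneg hΔt (hσs'_lo _)) (hm0 _).le
      have hdq : |Δt * σs' p.1 / m p.1| ≤ |q| := by
        rw [abs_of_nonneg hd0, abs_of_nonneg hq0]; exact ha p.1
      exact mul_le_mul_of_nonneg_right hdq (abs_nonneg _)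
    have step2 : eLpNorm (fun p => q * scatK Φ (w - w') p) 2 μ =
        (‖q‖₊ : ℝ≥0∞) * eLpNorm (scatK Φ (w - w')) 2 μ := by
      have he : (fun p => q * scatK Φ (w - w') p) = q • (scatK Φ (w - w')) := rfl
      rw [he, eLpNorm_const_smul]; rfl
    refine step1.trans (step2.le.trans ?_)
    have step3 : eLpNorm (scatK Φ (w - w')) 2 μ ≤ eLpNorm (w - w') 2 μ :=
      scat_eLpNorm_le hΦmeas hΦpos hΦsymm hΦnorm ρ (hwm.sub hw'm)
    calc (‖q‖₊ : ℝ≥0∞) * eLpNorm (scatK Φ (w - w')) 2 μ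
        ≤ (‖q‖₊ : ℝ≥0∞) * eLpNorm (w - w') 2 μ := mul_le_mul_right step3 _
      _ = ENNReal.ofReal q * eLpNorm (w - w') 2 μ := by
          exact congrArg (· * _) (Real.enorm_eq_ofReal hq0)
  haveI : Fact ((1:ℝ≥0∞) ≤ 2) := ⟨one_le_two⟩
  set R : Lp ℝ 2 μ → E3 × S2 → ℝ := fun u => (Lp.aestronglyMeasurable u).mk _ with hR
  have hR_meas : ∀ u : Lp ℝ 2 μ, Measurable (R u) := fun u =>
    (Lp.aestronglyMeasurable u).stronglyMeasurable_mk.measurable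
  have hR_ae : ∀ u : Lp ℝ 2 μ, (↑u : E3 × S2 → ℝ) =ᵐ[μ] R u := fun u =>
    (Lp.aestronglyMeasurable u).ae_eq_mk
  have hR_mem : ∀ u : Lp ℝ 2 μ, MemLp (R u) 2 μ := fun u => (Lp.memLp u).ae_eq (hR_ae u)
  set FL : Lp ℝ 2 μ → Lp ℝ 2 μ :=
    fun u => (hTf_mem (R u) (hR_meas u) (hR_mem u)).toLp (Tf (R u)) with hFL
  have hFL_coe : ∀ u : Lp ℝ 2 μ, (↑(FL u) : E3 × S2 → ℝ) =ᵐ[μ] Tf (R u) := fun u =>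
    MemLp.coeFn_toLp _
  have hlip : LipschitzWith (Real.toNNReal q) FL := by
    refine LipschitzWith.of_dist_le_mul fun u v => ?_
    rw [dist_eq_norm, dist_eq_norm]
    have hdiff : FL u - FL v =
        ((hTf_mem (R u) (hR_meas u) (hR_mem u)).sub
          (hTf_mem (R v) (hR_meas v) (hR_mem v))).toLp (Tf (R u) - Tf (R v)) :=
      (hTf_mem (R u) (hR_meas u) (hR_mem u)).toLp_sub
        (hTf_mem (R v) (hR_meas v) (hR_mem v))
    rw [hdiff, Lp.norm_toLp]
    have h1 : eLpNorm (Tf (R u) - Tf (R v)) 2 μ ≤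
        ENNReal.ofReal q * eLpNorm ((↑(u - v) : E3 × S2 → ℝ)) 2 μ := by
      refine (hTf_lip _ _ (hR_meas u) (hR_meas v) (hR_mem u) (hR_mem v)).trans (le_of_eq ?_)
      congr 1
      refine eLpNorm_congr_ae ?_
      exact ((hR_ae u).symm.sub (hR_ae v).symm).trans (Lp.coeFn_sub u v).symm
    have hfin : ENNReal.ofReal q * eLpNorm ((↑(u - v) : E3 × S2 → ℝ)) 2 μ ≠ ⊤ :=
      ENNReal.mul_ne_top ENNReal.ofReal_ne_top (Lp.memLp (u - v)).2.ne
    calc (eLpNorm (Tf (R u) - Tf (R v)) 2 μ).toReal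
        ≤ (ENNReal.ofReal q * eLpNorm ((↑(u - v) : E3 × S2 → ℝ)) 2 μ).toReal :=
          ENNReal.toReal_mono hfin h1
      _ = q * ‖u - v‖ := by
          rw [ENNReal.toReal_mul, ENNReal.toReal_ofReal hq0, Lp.norm_def]
      _ = (Real.toNNReal q : ℝ) * ‖u - v‖ := by rw [Real.coe_toNNReal _ hq0]
  have hcontr : ContractingWith (Real.toNNReal q) FL := by
    constructor
    · rw [← NNReal.coe_lt_coe, Real.coe_toNNReal _ hq0, NNReal.coe_one]
      exact hq1
    · exact hlip
  set uhat : Lp ℝ 2 μ := ContractingWith.fixedPoint FL hcontr with huhat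
  have hfixpt : FL uhat = uhat := hcontr.fixedPoint_isFixedPt
  set util : E3 × S2 → ℝ := R uhat with hutil
  have hut_mem : MemLp util 2 μ := hR_mem uhat
  have hfixeq : Tf util =ᵐ[μ] util := by
    have h1 : (↑(FL uhat) : E3 × S2 → ℝ) =ᵐ[μ] Tf (R uhat) := hFL_coe uhat
    have h2 : (↑(FL uhat) : E3 × S2 → ℝ) =ᵐ[μ] util := by
      rw [hfixpt]; exact hR_ae uhat
    exact h1.symm.trans h2
  have hσ_prod : ∀ᵐ p ∂μ, σa' p.1 = σa p.1 ∧ σs' p.1 = σs p.1 :=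
    ae_prod_fst ρ (hσa'_ae.and hσs'_ae)
  refine ⟨util, hut_mem, ?_, ?_⟩
  · filter_upwards [hfixeq, hσ_prod] with p hp hσp
    have h2 : util p * m p.1 = g p + Δt * σs' p.1 * scatK Φ util p := by
      rw [← hp]; simp only [hTf]
      field_simp
      exact mul_div_cancel_right₀ _ (hm0 p.1).ne'
    simp only [removalK, ← hσp.1, ← hσp.2]
    have hmexp : m p.1 = 1 + Δt * (σa' p.1 + σs' p.1) := rfl
    rw [hmexp] at h2
    linear_combination h2
  · intro util' hmem' heq'
    set w' : E3 × S2 → ℝ := hmem'.1.mk util' with hw'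
    have hw'_meas : Measurable w' := hmem'.1.stronglyMeasurable_mk.measurable
    have hae' : util' =ᵐ[μ] w' := hmem'.1.ae_eq_mk
    have hw'_mem : MemLp w' 2 μ := hmem'.ae_eq hae'
    set u' : Lp ℝ 2 μ := hw'_mem.toLp w' with hu'
    have hcoe' : (↑u' : E3 × S2 → ℝ) =ᵐ[μ] w' := MemLp.coeFn_toLp _
    have hscat_congr' : scatK Φ util' =ᵐ[μ] scatK Φ w' := scat_congr ρ hae'
    have hTfw' : Tf w' =ᵐ[μ] w' := by
      filter_upwards [heq', hσ_prod, hae', hscat_congr'] with p hp hσp he hsc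
      simp only [removalK] at hp
      rw [← hσp.1, ← hσp.2, he, hsc] at hp
      simp only [hTf]
      rw [div_eq_iff (hm0 p.1).ne']
      have hmexp : m p.1 = 1 + Δt * (σa' p.1 + σs' p.1) := rfl
      rw [hmexp]
      linear_combination -hp
    have hfix' : FL u' = u' := by
      apply Lp.ext
      have e1 : (↑(FL u') : E3 × S2 → ℝ) =ᵐ[μ] Tf (R u') := hFL_coe u'
      have hRw : R u' =ᵐ[μ] w' := (hR_ae u').symm.trans hcoe'
      have e2 : Tf (R u') =ᵐ[μ] Tf w' := by
        filter_upwards [scat_congr ρ hRw, hRw] with p h1 h2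
        simp only [hTf]
        rw [h1]
      exact e1.trans (e2.trans (hTfw'.trans hcoe'.symm))
    have hueq : u' = uhat := hcontr.fixedPoint_unique hfix'
    have hfin2 : (↑u' : E3 × S2 → ℝ) =ᵐ[μ] util := by
      rw [hueq]; exact hR_ae uhat
    exact hae'.trans (hcoe'.symm.trans hfin2)
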